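/- Let E be a differential field of characteristic zero and let a₁⁺, a₂⁺, a₃⁺, a₁⁻, a₂⁻, a₃⁻, a₁⁰, a₂⁰ ∈ E. Let r₁, r₂ be differential indeterminates over E and let K = E⟨r₁, r₂⟩ be the fraction field of the differential polynomial ring E{r₁, r₂}. Define c₃ = 0, c₂ = −a₃⁺, c₁ = a₃⁺r₁r₂ − a₂⁺r₂ − a₁⁺r₁ + a₁⁰ + a₂⁰, and c₀ = a₁⁻r₂ + a₃⁻ − r₁(a₂⁻ + (a₂⁰ − a₁⁰)r₂) + r₁r₂(a₂⁺r₂ − a₂⁰) − r₁r₂', all elements of K. Then for every positive integer m, the system Σ_m with these coefficients has no solution in K^m. -/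

import Mathlib

open MvPolynomial

/-- Extension of a tuple `(y₀,…,y_{m−1})` to all integer indices by the
conventions `y_m = 1` and `y_k = 0` for `k < 0` (in particular `y_{−1} = y_{−2} = 0`). -/
def sigmaExt {K : Type*} [Zero K] [One K] (m : ℕ) (y : ℕ → K) : ℤ → K :=
  fun k => if k < 0 then 0 else if k.toNat < m then y k.toNat
    else if k = (m : ℤ) then 1 else 0

/-- The right hand side of the `k`-th equation of the system `Σ_m`. -/
def sigmaRHS {K : Type*} [Field K] (c₀ c₁ c₂ c₃ : K) (m : ℕ) (Y : ℤ → K) (k : ℕ) : K :=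
  c₃ * ((2 * Y ((m : ℤ) - 2) - Y ((m : ℤ) - 1) ^ 2) * Y (k : ℤ)
      - (m : K) * Y ((m : ℤ) - 3) + (k : K) * Y ((k : ℤ) - 2)
      + Y ((m : ℤ) - 1) * Y ((k : ℤ) - 1) - 2 * Y ((k : ℤ) - 2))
    + (c₂ * Y ((m : ℤ) - 1) - (m : K) * c₁ + (k : K) * c₁) * Y (k : ℤ)
    + ((k : K) - (m : K) - 1) * c₂ * Y ((k : ℤ) - 1)
    + ((k : K) + 1) * c₀ * Y ((k : ℤ) + 1)

/-- `(y₀,…,y_{m−1}) ∈ K^m` is a solution of the system `Σ_m` for the differential field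
`(K, d)` and the coefficients `c₀, c₁, c₂, c₃`. -/
def IsSigmaSolution {K : Type*} [Field K] (d : K → K) (c₀ c₁ c₂ c₃ : K) (m : ℕ)
    (y : ℕ → K) : Prop :=
  ∀ k : ℕ, k < m → d (y k) = sigmaRHS c₀ c₁ c₂ c₃ m (sigmaExt m y) k

/-- The canonical map `E{r₁, r₂} → E⟨r₁, r₂⟩` into the fraction field. -/
noncomputable def toFrac {E : Type*} [Field E] (p : MvPolynomial (Fin 2 × ℕ) E) :
    FractionRing (MvPolynomial (Fin 2 × ℕ) E) :=
  algebraMap _ _ p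


section FracDeriv

variable {R : Type*} [CommRing R] [IsDomain R]

/-- Extension of an additive Leibniz map on `R` to the fraction field via the quotient rule. -/
noncomputable def fracDeriv (δ : R → R) (x : FractionRing R) : FractionRing R :=
  (algebraMap R (FractionRing R) (δ (IsLocalization.sec (nonZeroDivisors R) x).1)
      * algebraMap R (FractionRing R) ((IsLocalization.sec (nonZeroDivisors R) x).2 : R)
    - algebraMap R (FractionRing R) (IsLocalization.sec (nonZeroDivisors R) x).1
      * algebraMap R (FractionRing R) (δ ((IsLocalization.sec (nonZeroDivisors R) x).2 : R)))
  / algebraMap R (FractionRing R) ((IsLocalization.sec (nonZeroDivisors R) x).2 : R) ^ 2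

variable (δ : R → R)

theorem map_ne_zero_of_ne_zero {r : R} (hr : r ≠ 0) :
    algebraMap R (FractionRing R) r ≠ 0 := fun h =>
  hr (IsFractionRing.injective R (FractionRing R) (by rw [h, map_zero]))

theorem fracDeriv_spec (hmul : ∀ a b, δ (a * b) = a * δ b + δ a * b) (p q : R) (hq : q ≠ 0) :
    fracDeriv δ (algebraMap R (FractionRing R) p / algebraMap R (FractionRing R) q)
      = (algebraMap R (FractionRing R) (δ p) * algebraMap R (FractionRing R) q
          - algebraMap R (FractionRing R) p * algebraMap R (FractionRing R) (δ q))
        / algebraMap R (FractionRing R) q ^ 2 := by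
  set F := algebraMap R (FractionRing R) with hF
  set x := F p / F q with hx
  set a := (IsLocalization.sec (nonZeroDivisors R) x).1 with ha
  set b := ((IsLocalization.sec (nonZeroDivisors R) x).2 : R) with hb
  have hb0 : b ≠ 0 := nonZeroDivisors.ne_zero (IsLocalization.sec (nonZeroDivisors R) x).2.2
  have hFq : F q ≠ 0 := map_ne_zero_of_ne_zero hq
  have hFb : F b ≠ 0 := map_ne_zero_of_ne_zero hb0
  have hsec : x * F b = F a := IsLocalization.sec_spec (nonZeroDivisors R) x
  have h1K : F a * F q = F p * F b := by
    rw [← hsec, hx]; field_simp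
  have h1R : a * q = p * b := by
    apply IsFractionRing.injective R (FractionRing R)
    rw [map_mul, map_mul]; exact h1K
  have h2R : δ a * q + a * δ q = δ p * b + p * δ b := by
    have := congrArg δ h1R
    rw [hmul, hmul] at this; linear_combination this
  have h2K : F (δ a) * F q + F a * F (δ q) = F (δ p) * F b + F p * F (δ b) := by
    have := congrArg F h2R
    simpa only [map_add, map_mul] using this
  show (F (δ a) * F b - F a * F (δ b)) / F b ^ 2 = _
  rw [div_eq_div_iff (pow_ne_zero 2 hFb) (pow_ne_zero 2 hFq)]
  linear_combination (F b * F q) * h2K - (F (δ b) * F q + F (δ q) * F b) * h1K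

theorem fracDeriv_algebraMap (hmul : ∀ a b, δ (a * b) = a * δ b + δ a * b) (p : R) :
    fracDeriv δ (algebraMap R (FractionRing R) p) = algebraMap R (FractionRing R) (δ p) := by
  have h1 : δ 1 = 0 := by have := hmul 1 1; simpa using this
  have := fracDeriv_spec δ hmul p 1 one_ne_zero
  simpa [h1] using this

theorem fracDeriv_add (hadd : ∀ a b, δ (a + b) = δ a + δ b)
    (hmul : ∀ a b, δ (a * b) = a * δ b + δ a * b) (x y : FractionRing R) :
    fracDeriv δ (x + y) = fracDeriv δ x + fracDeriv δ y := by
  set F := algebraMap R (FractionRing R) with hF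
  obtain ⟨a, b, hb, rfl⟩ := IsFractionRing.div_surjective (A := R) x
  obtain ⟨c, d, hd, rfl⟩ := IsFractionRing.div_surjective (A := R) y
  have hb0 : b ≠ 0 := nonZeroDivisors.ne_zero hb
  have hd0 : d ≠ 0 := nonZeroDivisors.ne_zero hd
  have hFb : F b ≠ 0 := map_ne_zero_of_ne_zero hb0
  have hFd : F d ≠ 0 := map_ne_zero_of_ne_zero hd0
  have key : F a / F b + F c / F d = F (a * d + c * b) / F (b * d) := by
    rw [map_add, map_mul, map_mul, map_mul]; field_simp; try ring
  rw [key, fracDeriv_spec δ hmul _ _ (mul_ne_zero hb0 hd0), fracDeriv_spec δ hmul _ _ hb0,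
    fracDeriv_spec δ hmul _ _ hd0, hadd, hmul, hmul, hmul]
  simp only [map_add, map_mul]
  have hFb' : algebraMap R (FractionRing R) b ≠ 0 := hFb
  have hFd' : algebraMap R (FractionRing R) d ≠ 0 := hFd
  field_simp
  try ring

theorem fracDeriv_mul (hmul : ∀ a b, δ (a * b) = a * δ b + δ a * b) (x y : FractionRing R) :
    fracDeriv δ (x * y) = x * fracDeriv δ y + fracDeriv δ x * y := by
  set F := algebraMap R (FractionRing R) with hF
  obtain ⟨a, b, hb, rfl⟩ := IsFractionRing.div_surjective (A := R) x
  obtain ⟨c, d, hd, rfl⟩ := IsFractionRing.div_surjective (A := R) y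
  have hb0 : b ≠ 0 := nonZeroDivisors.ne_zero hb
  have hd0 : d ≠ 0 := nonZeroDivisors.ne_zero hd
  have hFb : F b ≠ 0 := map_ne_zero_of_ne_zero hb0
  have hFd : F d ≠ 0 := map_ne_zero_of_ne_zero hd0
  have key : F a / F b * (F c / F d) = F (a * c) / F (b * d) := by
    rw [map_mul, map_mul]; field_simp
  rw [key, fracDeriv_spec δ hmul _ _ (mul_ne_zero hb0 hd0), fracDeriv_spec δ hmul _ _ hb0,
    fracDeriv_spec δ hmul _ _ hd0, hmul, hmul]
  simp only [map_add, map_mul]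
  field_simp
  try ring

end FracDeriv


theorem mapfrac_ne_zero {R : Type*} [CommRing R] [IsDomain R] {r : R} (hr : r ≠ 0) :
    algebraMap R (FractionRing R) r ≠ 0 := fun h =>
  hr (IsFractionRing.injective R (FractionRing R) (by rw [h, map_zero]))

section DerivLike

variable {K : Type*} [CommRing K] (δ : K → K)

theorem dl_zero (hadd : ∀ a b, δ (a + b) = δ a + δ b) : δ 0 = 0 := by
  have := hadd 0 0; simpa using this.symm

theorem dl_one (hmul : ∀ a b, δ (a * b) = a * δ b + δ a * b) : δ 1 = 0 := by
  have := hmul 1 1; simpa using this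

theorem dl_neg (hadd : ∀ a b, δ (a + b) = δ a + δ b) (x : K) : δ (-x) = -δ x := by
  have := hadd x (-x)
  rw [add_neg_cancel, dl_zero δ hadd] at this
  linear_combination -this

theorem dl_sub (hadd : ∀ a b, δ (a + b) = δ a + δ b) (x y : K) : δ (x - y) = δ x - δ y := by
  rw [sub_eq_add_neg, hadd, dl_neg δ hadd, sub_eq_add_neg]

theorem dl_natCast (hadd : ∀ a b, δ (a + b) = δ a + δ b)
    (hmul : ∀ a b, δ (a * b) = a * δ b + δ a * b) (n : ℕ) : δ (n : K) = 0 := by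
  induction n with
  | zero => simpa using dl_zero δ hadd
  | succ n ih =>
    have : ((n + 1 : ℕ) : K) = (n : K) + 1 := by push_cast; ring
    rw [this, hadd, ih, dl_one δ hmul, add_zero]

theorem dl_ofNat2 (hadd : ∀ a b, δ (a + b) = δ a + δ b)
    (hmul : ∀ a b, δ (a * b) = a * δ b + δ a * b) : δ (2 : K) = 0 := by
  have : (2 : K) = ((2 : ℕ) : K) := by norm_num
  rw [this, dl_natCast δ hadd hmul]

end DerivLike

section Vanish

variable {R : Type*} [CommRing R] [IsDomain R]

/-- An additive Leibniz map on the fraction field vanishing on `R` vanishes everywhere. -/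
theorem derivLike_eq_zero (Δ : FractionRing R → FractionRing R)
    (hmul : ∀ x y, Δ (x * y) = x * Δ y + Δ x * y)
    (h0 : ∀ p : R, Δ (algebraMap R (FractionRing R) p) = 0) (x : FractionRing R) : Δ x = 0 := by
  obtain ⟨p, q, hq, rfl⟩ := IsFractionRing.div_surjective (A := R) x
  have hq0 : (algebraMap R (FractionRing R)) q ≠ 0 :=
    mapfrac_ne_zero (nonZeroDivisors.ne_zero hq)
  have h1 : Δ (algebraMap R (FractionRing R) p)
      = Δ ((algebraMap R (FractionRing R) p / algebraMap R (FractionRing R) q)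
        * algebraMap R (FractionRing R) q) := by
    rw [div_mul_cancel₀ _ hq0]
  rw [hmul, h0, h0] at h1
  have h2 : Δ (algebraMap R (FractionRing R) p / algebraMap R (FractionRing R) q)
      * algebraMap R (FractionRing R) q = 0 := by linear_combination -h1
  rcases mul_eq_zero.mp h2 with h | h
  · exact h
  · exact absurd h hq0

end Vanish

section Comm

variable {K : Type*} [CommRing K]

/-- The commutator of two additive Leibniz maps, minus another Leibniz map, is Leibniz. -/
theorem comm_sub_leibniz (δ₁ δ₂ δ₃ : K → K)
    (h1a : ∀ a b, δ₁ (a + b) = δ₁ a + δ₁ b)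
    (h1m : ∀ a b, δ₁ (a * b) = a * δ₁ b + δ₁ a * b)
    (h2a : ∀ a b, δ₂ (a + b) = δ₂ a + δ₂ b)
    (h2m : ∀ a b, δ₂ (a * b) = a * δ₂ b + δ₂ a * b)
    (h3m : ∀ a b, δ₃ (a * b) = a * δ₃ b + δ₃ a * b) (x y : K) :
    δ₁ (δ₂ (x * y)) - δ₂ (δ₁ (x * y)) - δ₃ (x * y)
      = x * (δ₁ (δ₂ y) - δ₂ (δ₁ y) - δ₃ y) + (δ₁ (δ₂ x) - δ₂ (δ₁ x) - δ₃ x) * y := by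
  rw [h2m x y, h1m x y, h3m x y, h1a, h1m, h1m, h2a, h2m, h2m]
  ring

end Comm

section PderivComm

variable {σ : Type*} {A : Type*} [CommSemiring A]

theorem pderiv_pderiv_comm (v w : σ) (p : MvPolynomial σ A) :
    pderiv v (pderiv w p) = pderiv w (pderiv v p) := by
  classical
  induction p using MvPolynomial.induction_on with
  | C a => simp [pderiv_C]
  | add p q hp hq => simp [map_add, hp, hq]
  | mul_X p s ih =>
    have hXX : ∀ u u' : σ, pderiv u (pderiv u' (X s : MvPolynomial σ A)) = 0 := by
      intro u u'
      rcases eq_or_ne s u' with rfl | h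
      · simp
      · simp [pderiv_X_of_ne h]
    rw [pderiv_mul, pderiv_mul, map_add, map_add, pderiv_mul, pderiv_mul, pderiv_mul,
      pderiv_mul, ih, hXX, hXX]
    ring

end PderivComm

section DPderiv

variable {E : Type*} [Field E] (dE : E → E)

theorem pderiv_D_comm (D : MvPolynomial (Fin 2 × ℕ) E → MvPolynomial (Fin 2 × ℕ) E)
    (hD_add : ∀ p q, D (p + q) = D p + D q)
    (hD_mul : ∀ p q, D (p * q) = p * D q + D p * q)
    (hD_C : ∀ c : E, D (MvPolynomial.C c) = MvPolynomial.C (dE c))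
    (hD_X : ∀ (i : Fin 2) (j : ℕ), D (X (i, j)) = X (i, j + 1))
    (i : Fin 2) (j : ℕ) (p : MvPolynomial (Fin 2 × ℕ) E) :
    pderiv (i, j + 1) (D p) = D (pderiv (i, j + 1) p) + pderiv (i, j) p := by
  classical
  have hD0 : D 0 = 0 := dl_zero D hD_add
  have hD1 : D 1 = 0 := dl_one D hD_mul
  induction p using MvPolynomial.induction_on with
  | C a => rw [hD_C]; simp [pderiv_C, hD0]
  | add p q hp hq =>
    rw [hD_add, map_add, map_add, map_add, hp, hq, hD_add]; ring
  | mul_X p s ih =>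
    obtain ⟨si, sj⟩ := s
    have keyX : pderiv (i, j + 1) (X (si, sj + 1) : MvPolynomial (Fin 2 × ℕ) E)
        = pderiv (i, j) (X (si, sj)) := by
      rcases eq_or_ne ((si, sj) : Fin 2 × ℕ) (i, j) with h | h
      · rw [Prod.ext_iff] at h
        obtain ⟨h1, h2⟩ := h
        subst h1; subst h2; simp
      · have h1 : ((si, sj + 1) : Fin 2 × ℕ) ≠ (i, j + 1) := by
          intro hc
          apply h
          rw [Prod.ext_iff] at hc ⊢
          exact ⟨hc.1, by omega⟩
        rw [pderiv_X_of_ne h1, pderiv_X_of_ne h]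
    have hDXd : D (pderiv (i, j + 1) (X (si, sj) : MvPolynomial (Fin 2 × ℕ) E)) = 0 := by
      rcases eq_or_ne ((si, sj) : Fin 2 × ℕ) (i, j + 1) with h | h
      · rw [h, pderiv_X_self, hD1]
      · rw [pderiv_X_of_ne h, hD0]
    simp only [hD_mul, hD_X, map_add, pderiv_mul, ih, hD_add, hDXd, keyX]
    ring

end DPderiv

section PD

variable {E : Type*} [Field E]

/-- The extension of `pderiv v` to `E⟨r₁,r₂⟩`. -/
noncomputable def pd (v : Fin 2 × ℕ) :
    FractionRing (MvPolynomial (Fin 2 × ℕ) E) → FractionRing (MvPolynomial (Fin 2 × ℕ) E) :=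
  fracDeriv (fun p => pderiv v p)

theorem pderiv_hmul (v : Fin 2 × ℕ) (a b : MvPolynomial (Fin 2 × ℕ) E) :
    pderiv v (a * b) = a * pderiv v b + pderiv v a * b := by
  rw [pderiv_mul]; ring

theorem pd_add (v : Fin 2 × ℕ) (x y : FractionRing (MvPolynomial (Fin 2 × ℕ) E)) :
    pd v (x + y) = pd v x + pd v y :=
  fracDeriv_add _ (fun a b => map_add _ a b) (pderiv_hmul v) x y

theorem pd_mul (v : Fin 2 × ℕ) (x y : FractionRing (MvPolynomial (Fin 2 × ℕ) E)) :
    pd v (x * y) = x * pd v y + pd v x * y :=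
  fracDeriv_mul _ (pderiv_hmul v) x y

theorem pd_toFrac (v : Fin 2 × ℕ) (p : MvPolynomial (Fin 2 × ℕ) E) :
    pd v (toFrac p) = toFrac (pderiv v p) :=
  fracDeriv_algebraMap _ (pderiv_hmul v) p

theorem pd_zero (v : Fin 2 × ℕ) : pd v (0 : FractionRing (MvPolynomial (Fin 2 × ℕ) E)) = 0 :=
  dl_zero _ (pd_add v)

theorem pd_one (v : Fin 2 × ℕ) : pd v (1 : FractionRing (MvPolynomial (Fin 2 × ℕ) E)) = 0 :=
  dl_one _ (pd_mul v)

theorem pd_neg (v : Fin 2 × ℕ) (x : FractionRing (MvPolynomial (Fin 2 × ℕ) E)) :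
    pd v (-x) = -pd v x :=
  dl_neg _ (pd_add v) x

theorem pd_sub (v : Fin 2 × ℕ) (x y : FractionRing (MvPolynomial (Fin 2 × ℕ) E)) :
    pd v (x - y) = pd v x - pd v y :=
  dl_sub _ (pd_add v) x y

theorem pd_natCast (v : Fin 2 × ℕ) (n : ℕ) :
    pd v ((n : ℕ) : FractionRing (MvPolynomial (Fin 2 × ℕ) E)) = 0 :=
  dl_natCast _ (pd_add v) (pd_mul v) n

theorem pd_two (v : Fin 2 × ℕ) : pd v ((2 : FractionRing (MvPolynomial (Fin 2 × ℕ) E))) = 0 :=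
  dl_ofNat2 _ (pd_add v) (pd_mul v)

theorem pd_C (v : Fin 2 × ℕ) (a : E) : pd v (toFrac (MvPolynomial.C a)) = 0 := by
  rw [pd_toFrac, pderiv_C]
  show algebraMap _ _ (0 : MvPolynomial (Fin 2 × ℕ) E) = 0
  rw [map_zero]

theorem pd_X_self (v : Fin 2 × ℕ) : pd v (toFrac (X v) :
    FractionRing (MvPolynomial (Fin 2 × ℕ) E)) = 1 := by
  rw [pd_toFrac, pderiv_X_self]
  show algebraMap _ _ (1 : MvPolynomial (Fin 2 × ℕ) E) = 1
  rw [map_one]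

theorem pd_X_ne (v w : Fin 2 × ℕ) (h : w ≠ v) : pd v (toFrac (X w) :
    FractionRing (MvPolynomial (Fin 2 × ℕ) E)) = 0 := by
  classical
  rw [pd_toFrac, pderiv_X_of_ne h]
  show algebraMap _ _ (0 : MvPolynomial (Fin 2 × ℕ) E) = 0
  rw [map_zero]

theorem pd_comm (v w : Fin 2 × ℕ) (x : FractionRing (MvPolynomial (Fin 2 × ℕ) E)) :
    pd v (pd w x) = pd w (pd v x) := by
  have hml : ∀ x y : FractionRing (MvPolynomial (Fin 2 × ℕ) E),
      pd v (pd w (x * y)) - pd w (pd v (x * y))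
        = x * (pd v (pd w y) - pd w (pd v y)) + (pd v (pd w x) - pd w (pd v x)) * y := by
    intro x y
    have := comm_sub_leibniz (pd v) (pd w)
      (fun _ => (0 : FractionRing (MvPolynomial (Fin 2 × ℕ) E)))
      (pd_add v) (pd_mul v) (pd_add w) (pd_mul w)
      (fun a b => by show (0 : FractionRing (MvPolynomial (Fin 2 × ℕ) E)) = a * 0 + 0 * b; ring)
      x y
    simpa using this
  have h0 : ∀ p : MvPolynomial (Fin 2 × ℕ) E,
      pd v (pd w (toFrac p)) - pd w (pd v (toFrac p)) = 0 := by
    intro p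
    rw [pd_toFrac, pd_toFrac, pd_toFrac, pd_toFrac, pderiv_pderiv_comm]
    ring
  have := derivLike_eq_zero (fun z => pd v (pd w z) - pd w (pd v z)) hml h0 x
  exact sub_eq_zero.mp this

theorem pd_kill_bound (x : FractionRing (MvPolynomial (Fin 2 × ℕ) E)) :
    ∃ N : ℕ, ∀ (i : Fin 2) (j : ℕ), N < j → pd (i, j) x = 0 := by
  obtain ⟨p, q, hq, rfl⟩ := IsFractionRing.div_surjective (A := MvPolynomial (Fin 2 × ℕ) E) x
  refine ⟨(p.vars ∪ q.vars).sup Prod.snd, fun i j hj => ?_⟩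
  have hp : pderiv (i, j) p = 0 := by
    apply pderiv_eq_zero_of_notMem_vars
    intro hmem
    have := Finset.le_sup (f := Prod.snd) (Finset.mem_union_left q.vars hmem)
    simp only at this
    omega
  have hq' : pderiv (i, j) q = 0 := by
    apply pderiv_eq_zero_of_notMem_vars
    intro hmem
    have := Finset.le_sup (f := Prod.snd) (Finset.mem_union_right p.vars hmem)
    simp only at this
    omega
  have hq0 : q ≠ 0 := nonZeroDivisors.ne_zero hq
  show fracDeriv _ _ = 0
  rw [fracDeriv_spec _ (pderiv_hmul (i, j)) p q hq0, hp, hq']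
  simp

end PD

section DKComm

variable {E : Type*} [Field E]

theorem toFrac_add (p q : MvPolynomial (Fin 2 × ℕ) E) :
    toFrac (p + q) = toFrac p + toFrac q :=
  map_add (algebraMap (MvPolynomial (Fin 2 × ℕ) E) (FractionRing (MvPolynomial (Fin 2 × ℕ) E))) p q

theorem pd_DK (dE : E → E)
    (D : MvPolynomial (Fin 2 × ℕ) E → MvPolynomial (Fin 2 × ℕ) E)
    (hD_add : ∀ p q, D (p + q) = D p + D q)
    (hD_mul : ∀ p q, D (p * q) = p * D q + D p * q)
    (hD_C : ∀ c : E, D (MvPolynomial.C c) = MvPolynomial.C (dE c))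
    (hD_X : ∀ (i : Fin 2) (j : ℕ), D (X (i, j)) = X (i, j + 1))
    (DK : FractionRing (MvPolynomial (Fin 2 × ℕ) E) →
          FractionRing (MvPolynomial (Fin 2 × ℕ) E))
    (hDK_add : ∀ x y, DK (x + y) = DK x + DK y)
    (hDK_mul : ∀ x y, DK (x * y) = x * DK y + DK x * y)
    (hDK_compat : ∀ p : MvPolynomial (Fin 2 × ℕ) E, DK (toFrac p) = toFrac (D p))
    (i : Fin 2) (j : ℕ) (x : FractionRing (MvPolynomial (Fin 2 × ℕ) E)) :
    pd (i, j + 1) (DK x) = DK (pd (i, j + 1) x) + pd (i, j) x := by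
  have hml : ∀ x y : FractionRing (MvPolynomial (Fin 2 × ℕ) E),
      pd (i, j+1) (DK (x * y)) - DK (pd (i, j+1) (x * y)) - pd (i, j) (x * y)
        = x * (pd (i, j+1) (DK y) - DK (pd (i, j+1) y) - pd (i, j) y)
          + (pd (i, j+1) (DK x) - DK (pd (i, j+1) x) - pd (i, j) x) * y :=
    comm_sub_leibniz (pd (i, j+1)) DK (pd (i, j)) (pd_add _) (pd_mul _) hDK_add hDK_mul
      (pd_mul _)
  have h0 : ∀ p : MvPolynomial (Fin 2 × ℕ) E,
      pd (i, j+1) (DK (toFrac p)) - DK (pd (i, j+1) (toFrac p)) - pd (i, j) (toFrac p) = 0 := by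
    intro p
    rw [hDK_compat, pd_toFrac, pd_toFrac, pd_toFrac, hDK_compat,
      pderiv_D_comm dE D hD_add hD_mul hD_C hD_X i j p, toFrac_add]
    ring
  have := derivLike_eq_zero
    (fun z => pd (i, j+1) (DK z) - DK (pd (i, j+1) z) - pd (i, j) z) hml h0 x
  linear_combination this

end DKComm

section RHS

variable {E : Type*} [Field E]

theorem pd_sigmaRHS (v : Fin 2 × ℕ)
    (c₀ c₁ c₂ : FractionRing (MvPolynomial (Fin 2 × ℕ) E)) (m k : ℕ)
    (Y : ℤ → FractionRing (MvPolynomial (Fin 2 × ℕ) E))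
    (hY : ∀ t, pd v (Y t) = 0) (h1 : pd v c₁ = 0) (h2 : pd v c₂ = 0) :
    pd v (sigmaRHS c₀ c₁ c₂ 0 m Y k)
      = ((k : FractionRing (MvPolynomial (Fin 2 × ℕ) E)) + 1) * pd v c₀ * Y ((k : ℤ) + 1) := by
  unfold sigmaRHS
  simp only [pd_add, pd_mul, pd_sub, pd_natCast, pd_one, pd_zero, pd_two, hY, h1, h2, pow_two,
    mul_zero, zero_mul, add_zero, zero_add, sub_zero, zero_sub, neg_zero]
  try ring

end RHS

set_option maxHeartbeats 2000000 in
/-- **No solutions of `Σ_m` over `E⟨r₁, r₂⟩` (Lemma 7.5).**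
Let `E` be a differential field of characteristic zero with derivation `dE`, elements
`a₁⁺, a₂⁺, a₃⁺, a₁⁻, a₂⁻, a₃⁻, a₁⁰, a₂⁰ ∈ E`, and let `K = E⟨r₁, r₂⟩` be the fraction field
of the differential polynomial ring `E{r₁, r₂}` (modelled as `MvPolynomial (Fin 2 × ℕ) E`
with `X (i, j)` playing the role of `r_{i+1}^{(j)}`), with `D` the unique derivation of
`E{r₁, r₂}` extending `dE` and `DK` its unique extension to `K`.  With
`c₃ = 0`, `c₂ = −a₃⁺`, `c₁ = a₃⁺r₁r₂ − a₂⁺r₂ − a₁⁺r₁ + a₁⁰ + a₂⁰` and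
`c₀ = a₁⁻r₂ + a₃⁻ − r₁(a₂⁻ + (a₂⁰ − a₁⁰)r₂) + r₁r₂(a₂⁺r₂ − a₂⁰) − r₁r₂'`,
for every positive integer `m` the system `Σ_m` has no solution in `K^m`. -/
theorem no_sigma_solutions_over_E_r1_r2
    {E : Type*} [Field E] [CharZero E] (dE : E → E)
    (hdE_add : ∀ a b : E, dE (a + b) = dE a + dE b)
    (hdE_mul : ∀ a b : E, dE (a * b) = a * dE b + dE a * b)
    (a1p a2p a3p a1m a2m a3m a10 a20 : E)
    (D : MvPolynomial (Fin 2 × ℕ) E → MvPolynomial (Fin 2 × ℕ) E)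
    (hD_add : ∀ p q, D (p + q) = D p + D q)
    (hD_mul : ∀ p q, D (p * q) = p * D q + D p * q)
    (hD_C : ∀ c : E, D (MvPolynomial.C c) = MvPolynomial.C (dE c))
    (hD_X : ∀ (i : Fin 2) (j : ℕ), D (X (i, j)) = X (i, j + 1))
    (DK : FractionRing (MvPolynomial (Fin 2 × ℕ) E) →
          FractionRing (MvPolynomial (Fin 2 × ℕ) E))
    (hDK_add : ∀ x y, DK (x + y) = DK x + DK y)
    (hDK_mul : ∀ x y, DK (x * y) = x * DK y + DK x * y)
    (hDK_compat : ∀ p : MvPolynomial (Fin 2 × ℕ) E, DK (toFrac p) = toFrac (D p)) :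
    ∀ m : ℕ, 1 ≤ m → ∀ y : ℕ → FractionRing (MvPolynomial (Fin 2 × ℕ) E),
      ¬ IsSigmaSolution DK
        (toFrac (MvPolynomial.C a1m) * toFrac (X ((1 : Fin 2), 0)) +
          toFrac (MvPolynomial.C a3m) -
          toFrac (X ((0 : Fin 2), 0)) * (toFrac (MvPolynomial.C a2m) +
            (toFrac (MvPolynomial.C a20) - toFrac (MvPolynomial.C a10)) *
              toFrac (X ((1 : Fin 2), 0))) +
          toFrac (X ((0 : Fin 2), 0)) * toFrac (X ((1 : Fin 2), 0)) *
            (toFrac (MvPolynomial.C a2p) * toFrac (X ((1 : Fin 2), 0)) -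
              toFrac (MvPolynomial.C a20)) -
          toFrac (X ((0 : Fin 2), 0)) * toFrac (X ((1 : Fin 2), 1)))
        (toFrac (MvPolynomial.C a3p) * toFrac (X ((0 : Fin 2), 0)) *
            toFrac (X ((1 : Fin 2), 0)) -
          toFrac (MvPolynomial.C a2p) * toFrac (X ((1 : Fin 2), 0)) -
          toFrac (MvPolynomial.C a1p) * toFrac (X ((0 : Fin 2), 0)) +
          toFrac (MvPolynomial.C a10) + toFrac (MvPolynomial.C a20))
        (- toFrac (MvPolynomial.C a3p))
        0 m y := by
  intro m hm y hsol
  set c0 : FractionRing (MvPolynomial (Fin 2 × ℕ) E) :=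
    toFrac (MvPolynomial.C a1m) * toFrac (X ((1 : Fin 2), 0)) +
      toFrac (MvPolynomial.C a3m) -
      toFrac (X ((0 : Fin 2), 0)) * (toFrac (MvPolynomial.C a2m) +
        (toFrac (MvPolynomial.C a20) - toFrac (MvPolynomial.C a10)) *
          toFrac (X ((1 : Fin 2), 0))) +
      toFrac (X ((0 : Fin 2), 0)) * toFrac (X ((1 : Fin 2), 0)) *
        (toFrac (MvPolynomial.C a2p) * toFrac (X ((1 : Fin 2), 0)) -
          toFrac (MvPolynomial.C a20)) -
      toFrac (X ((0 : Fin 2), 0)) * toFrac (X ((1 : Fin 2), 1)) with hc0def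
  set c1 : FractionRing (MvPolynomial (Fin 2 × ℕ) E) :=
    toFrac (MvPolynomial.C a3p) * toFrac (X ((0 : Fin 2), 0)) *
        toFrac (X ((1 : Fin 2), 0)) -
      toFrac (MvPolynomial.C a2p) * toFrac (X ((1 : Fin 2), 0)) -
      toFrac (MvPolynomial.C a1p) * toFrac (X ((0 : Fin 2), 0)) +
      toFrac (MvPolynomial.C a10) + toFrac (MvPolynomial.C a20) with hc1def
  set c2 : FractionRing (MvPolynomial (Fin 2 × ℕ) E) :=
    - toFrac (MvPolynomial.C a3p) with hc2def
  -- basic kills of the coefficients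
  have hc2kill : ∀ v : Fin 2 × ℕ, pd v c2 = 0 := by
    intro v; rw [hc2def, pd_neg, pd_C, neg_zero]
  have hc1kill : ∀ (i : Fin 2) (j : ℕ), 1 ≤ j → pd (i, j) c1 = 0 := by
    intro i j hj
    have h00 : pd (i, j) (toFrac (X ((0:Fin 2), 0)) :
        FractionRing (MvPolynomial (Fin 2 × ℕ) E)) = 0 := by
      apply pd_X_ne; intro hc; rw [Prod.ext_iff] at hc; omega
    have h10 : pd (i, j) (toFrac (X ((1:Fin 2), 0)) :
        FractionRing (MvPolynomial (Fin 2 × ℕ) E)) = 0 := by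
      apply pd_X_ne; intro hc; rw [Prod.ext_iff] at hc; omega
    rw [hc1def]
    simp only [pd_add, pd_sub, pd_mul, pd_C, h00, h10, mul_zero, zero_mul, add_zero, zero_add,
      sub_zero, zero_sub, neg_zero, sub_self]
  have hc0kill : ∀ (i : Fin 2) (j : ℕ), 2 ≤ j → pd (i, j) c0 = 0 := by
    intro i j hj
    have h00 : pd (i, j) (toFrac (X ((0:Fin 2), 0)) :
        FractionRing (MvPolynomial (Fin 2 × ℕ) E)) = 0 := by
      apply pd_X_ne; intro hc; rw [Prod.ext_iff] at hc; omega
    have h10 : pd (i, j) (toFrac (X ((1:Fin 2), 0)) :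
        FractionRing (MvPolynomial (Fin 2 × ℕ) E)) = 0 := by
      apply pd_X_ne; intro hc; rw [Prod.ext_iff] at hc; omega
    have h11 : pd (i, j) (toFrac (X ((1:Fin 2), 1)) :
        FractionRing (MvPolynomial (Fin 2 × ℕ) E)) = 0 := by
      apply pd_X_ne; intro hc; rw [Prod.ext_iff] at hc; omega
    rw [hc0def]
    simp only [pd_add, pd_sub, pd_mul, pd_C, h00, h10, h11, mul_zero, zero_mul, add_zero,
      zero_add, sub_zero, zero_sub, neg_zero, sub_self]
  have hpd11c0 : pd ((1:Fin 2), 1) c0 = - toFrac (X ((0:Fin 2), 0)) := by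
    have h00 : pd ((1:Fin 2), 1) (toFrac (X ((0:Fin 2), 0)) :
        FractionRing (MvPolynomial (Fin 2 × ℕ) E)) = 0 := by
      apply pd_X_ne; intro hc; rw [Prod.ext_iff] at hc; omega
    have h10 : pd ((1:Fin 2), 1) (toFrac (X ((1:Fin 2), 0)) :
        FractionRing (MvPolynomial (Fin 2 × ℕ) E)) = 0 := by
      apply pd_X_ne; intro hc; rw [Prod.ext_iff] at hc; omega
    have h11 : pd ((1:Fin 2), 1) (toFrac (X ((1:Fin 2), 1)) :
        FractionRing (MvPolynomial (Fin 2 × ℕ) E)) = 1 := pd_X_self _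
    rw [hc0def]
    simp only [pd_add, pd_sub, pd_mul, pd_C, h00, h10, h11, mul_zero, zero_mul, add_zero,
      zero_add, sub_zero, zero_sub, neg_zero, sub_self, mul_one]
    try ring
  have hpd01c0 : pd ((0:Fin 2), 1) c0 = 0 := by
    have h00 : pd ((0:Fin 2), 1) (toFrac (X ((0:Fin 2), 0)) :
        FractionRing (MvPolynomial (Fin 2 × ℕ) E)) = 0 := by
      apply pd_X_ne; intro hc; rw [Prod.ext_iff] at hc; omega
    have h10 : pd ((0:Fin 2), 1) (toFrac (X ((1:Fin 2), 0)) :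
        FractionRing (MvPolynomial (Fin 2 × ℕ) E)) = 0 := by
      apply pd_X_ne; intro hc; rw [Prod.ext_iff] at hc; omega
    have h11 : pd ((0:Fin 2), 1) (toFrac (X ((1:Fin 2), 1)) :
        FractionRing (MvPolynomial (Fin 2 × ℕ) E)) = 0 := by
      apply pd_X_ne; intro hc; rw [Prod.ext_iff] at hc
      exact absurd hc.1 (by decide)
    rw [hc0def]
    simp only [pd_add, pd_sub, pd_mul, pd_C, h00, h10, h11, mul_zero, zero_mul, add_zero,
      zero_add, sub_zero, zero_sub, neg_zero, sub_self]
  have hDK0 : DK 0 = 0 := dl_zero DK hDK_add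
  -- the elimination of higher-order variables
  set S : ℕ → Prop := fun d => ∀ k, k < m → ∀ (i : Fin 2) (j : ℕ), d < j → pd (i, j) (y k) = 0
    with hSdef
  have hYext : ∀ d, S d → ∀ (i : Fin 2) (j : ℕ), d < j →
      ∀ t : ℤ, pd (i, j) (sigmaExt m y t) = 0 := by
    intro d hS i j hj t
    unfold sigmaExt
    split_ifs with h1 h2 h3
    · exact pd_zero _
    · exact hS _ h2 _ _ hj
    · exact pd_one _
    · exact pd_zero _
  have hstep : ∀ d, 1 ≤ d → S d → S (d - 1) := by
    intro d hd hS k hk i j hj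
    rcases Nat.lt_or_ge d j with h | h
    · exact hS k hk i j h
    · have hjd : j = d := by omega
      subst hjd
      have hdk := pd_DK dE D hD_add hD_mul hD_C hD_X DK hDK_add hDK_mul hDK_compat i j (y k)
      rw [hsol k hk, hS k hk i (j+1) (by omega), hDK0, zero_add,
        pd_sigmaRHS (i, j+1) c0 c1 c2 m k (sigmaExt m y)
          (hYext _ hS i (j+1) (by omega)) (hc1kill i (j+1) (by omega)) (hc2kill _),
        hc0kill i (j+1) (by omega)] at hdk
      rw [← hdk]; ring
  have hdown : ∀ n : ℕ, S n → S 0 := by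
    intro n
    induction n with
    | zero => exact id
    | succ n ih =>
      intro h
      have := hstep (n + 1) (by omega) h
      simpa using ih (by simpa using this)
  have hS0 : S 0 := by
    have hNy : ∀ k : ℕ, ∃ N, ∀ (i : Fin 2) (j : ℕ), N < j → pd (i, j) (y k) = 0 :=
      fun k => pd_kill_bound (y k)
    choose Nf hNf using hNy
    apply hdown ((Finset.range m).sup Nf)
    intro k hk i j hj
    exact hNf k i j (lt_of_le_of_lt (Finset.le_sup (Finset.mem_range.mpr hk)) hj)
  -- order-zero analysis
  have h1 : ∀ k, k < m → pd ((1:Fin 2), 0) (y k)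
      = ((k : FractionRing (MvPolynomial (Fin 2 × ℕ) E)) + 1)
        * (- toFrac (X ((0:Fin 2), 0))) * sigmaExt m y ((k : ℤ) + 1) := by
    intro k hk
    have hdk : pd ((1:Fin 2), 1) (DK (y k))
        = DK (pd ((1:Fin 2), 1) (y k)) + pd ((1:Fin 2), 0) (y k) :=
      pd_DK dE D hD_add hD_mul hD_C hD_X DK hDK_add hDK_mul hDK_compat 1 0 (y k)
    rw [hsol k hk, hS0 k hk 1 1 (by omega), hDK0, zero_add,
      pd_sigmaRHS ((1:Fin 2), 1) c0 c1 c2 m k (sigmaExt m y)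
        (hYext 0 hS0 1 1 (by omega)) (hc1kill 1 1 (by omega)) (hc2kill _)] at hdk
    rw [← hdk, hpd11c0]
  have h2 : ∀ k, k < m → pd ((0:Fin 2), 0) (y k) = 0 := by
    intro k hk
    have hdk : pd ((0:Fin 2), 1) (DK (y k))
        = DK (pd ((0:Fin 2), 1) (y k)) + pd ((0:Fin 2), 0) (y k) :=
      pd_DK dE D hD_add hD_mul hD_C hD_X DK hDK_add hDK_mul hDK_compat 0 0 (y k)
    rw [hsol k hk, hS0 k hk 0 1 (by omega), hDK0, zero_add,
      pd_sigmaRHS ((0:Fin 2), 1) c0 c1 c2 m k (sigmaExt m y)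
        (hYext 0 hS0 0 1 (by omega)) (hc1kill 0 1 (by omega)) (hc2kill _),
      hpd01c0] at hdk
    rw [← hdk]; ring
  -- final contradiction
  have hk : m - 1 < m := by omega
  have hcast : ((m - 1 : ℕ) : ℤ) + 1 = (m : ℤ) := by omega
  have hY1 : sigmaExt m y (((m - 1 : ℕ) : ℤ) + 1) = 1 := by
    rw [hcast]
    unfold sigmaExt
    rw [if_neg (by omega), if_neg (by simp), if_pos rfl]
  have hfin := congrArg (pd ((0:Fin 2), 0)) (h1 (m - 1) hk)
  rw [pd_comm, h2 (m - 1) hk, pd_zero, hY1, mul_one] at hfin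
  have hpd00 : pd ((0:Fin 2), 0) (((m - 1 : ℕ) : FractionRing (MvPolynomial (Fin 2 × ℕ) E)) + 1)
      = 0 := by rw [pd_add, pd_natCast, pd_one, add_zero]
  rw [pd_mul, hpd00, pd_neg, pd_X_self, zero_mul, add_zero, mul_neg_one] at hfin
  have hzero : ((m - 1 : ℕ) : FractionRing (MvPolynomial (Fin 2 × ℕ) E)) + 1 = 0 := by
    linear_combination hfin
  have hmK : ((m : ℕ) : FractionRing (MvPolynomial (Fin 2 × ℕ) E)) = 0 := by
    have h' : ((m - 1 + 1 : ℕ) : FractionRing (MvPolynomial (Fin 2 × ℕ) E)) = 0 := by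
      push_cast
      linear_combination hzero
    rwa [Nat.sub_add_cancel hm] at h'
  have : m = 0 := Nat.cast_eq_zero.mp hmK
  omega
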